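/- arXiv:1910.09672 — 4 statements merged into one kernel-verified Lean document; each statement's English description precedes it below -/
import Mathlib

section
/- Let D := 1 − 4x − 2tx + t²x² in the ring (ℚ[[t]])[[x]]. Then: (i) there exists a unique s ∈ (ℚ[[t]])[[x]] with s² = D whose constant coefficient equals 1; (ii) the element 2(1+t) is a unit of ℚ[[t]], and the two series f₊ := (2(1+t))⁻¹·(1 + tx + s) and f₋ := (2(1+t))⁻¹·(1 + tx − s) both satisfy f = (1+t)·f² − t·x·f + x; (iii) every solution of this equation in (ℚ[[t]])[[x]] equals f₊ or f₋. -/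
/-!
STATEMENT 1: In `(ℚ[[t]])[[x]]`, let `D := 1 − 4x − 2tx + t²x²`.  Then:
(i) there is a unique `s` with `s² = D` and constant coefficient `1`;
(ii) `2(1+t)` is a unit of `ℚ[[t]]`, and `f± := (2(1+t))⁻¹·(1 + tx ± s)` both satisfy
`f = (1+t)·f² − t·x·f + x`;
(iii) every solution of this equation equals `f₊` or `f₋`.
-/

noncomputable section

/-- The element `t`, i.e. the coefficient-ring variable, viewed in `(ℚ[[t]])[[x]]`. -/
def tS : PowerSeries (PowerSeries ℚ) := PowerSeries.C PowerSeries.X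

/-- `D = 1 − 4x − 2tx + t²x²` in `(ℚ[[t]])[[x]]`. -/
def DS : PowerSeries (PowerSeries ℚ) :=
  1 - 4 * PowerSeries.X - 2 * tS * PowerSeries.X + tS ^ 2 * PowerSeries.X ^ 2

/-- `(2(1+t))⁻¹`, computed in `ℚ[[t]]` and viewed as a constant of `(ℚ[[t]])[[x]]`. -/
def cS : PowerSeries (PowerSeries ℚ) :=
  PowerSeries.C ((2 * (1 + PowerSeries.X) : PowerSeries ℚ)⁻¹)

/-- The equation `f = (1+t)·f² − t·x·f + x`. -/
def EqS (f : PowerSeries (PowerSeries ℚ)) : Prop :=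
  f = (1 + tS) * f ^ 2 - tS * PowerSeries.X * f + PowerSeries.X

/-- Coefficients of the square root of `DS`, defined by the standard recursion. -/
def sqc : ℕ → PowerSeries ℚ
  | 0 => 1
  | (n+1) => PowerSeries.C (R := ℚ) (1/2) *
      (PowerSeries.coeff (R := PowerSeries ℚ) (n+1) DS
        - ∑ i ∈ (Finset.range n).attach, sqc (i.1+1) * sqc (n - i.1))
termination_by n => n
decreasing_by
  · have := Finset.mem_range.mp i.2; omega
  · have := Finset.mem_range.mp i.2; omega

/-- The square root of `DS` with constant coefficient `1`. -/
def s0 : PowerSeries (PowerSeries ℚ) := PowerSeries.mk sqc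

lemma h2half : (2 : PowerSeries ℚ) * PowerSeries.C (R := ℚ) (1/2) = 1 := by
  rw [← map_ofNat (PowerSeries.C (R := ℚ)) 2, ← map_mul]
  norm_num

lemma sqc_zero : sqc 0 = 1 := by rw [sqc]

lemma s0_cc : PowerSeries.constantCoeff (R := PowerSeries ℚ) s0 = 1 := by
  simp [s0, ← PowerSeries.coeff_zero_eq_constantCoeff, sqc_zero]

lemma s0_sq : s0 ^ 2 = DS := by
  refine PowerSeries.ext fun n => ?_
  rw [pow_two, PowerSeries.coeff_mul, Finset.Nat.sum_antidiagonal_eq_sum_range_succ_mk]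
  cases n with
  | zero => simp [s0, sqc_zero, DS, tS]
  | succ n =>
    simp only [s0, PowerSeries.coeff_mk]
    rw [Finset.sum_range_succ', Finset.sum_range_succ]
    have hdef : sqc (n+1) = PowerSeries.C (R := ℚ) (1/2) *
      (PowerSeries.coeff (R := PowerSeries ℚ) (n+1) DS
        - ∑ i ∈ (Finset.range n).attach, sqc (i.1+1) * sqc (n - i.1)) := by
      rw [sqc]
    rw [Finset.sum_attach (Finset.range n) (fun i => sqc (i+1) * sqc (n - i))] at hdef
    simp only [Nat.succ_sub_succ, Nat.sub_self, Nat.sub_zero]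
    rw [sqc_zero]
    have hdef2 : (2 : PowerSeries ℚ) * sqc (n+1) =
        PowerSeries.coeff (R := PowerSeries ℚ) (n+1) DS
          - ∑ i ∈ Finset.range n, sqc (i+1) * sqc (n - i) := by
      rw [hdef, ← mul_assoc, h2half, one_mul]
    linear_combination hdef2

theorem stmt_1 :
    (∃! s : PowerSeries (PowerSeries ℚ),
        s ^ 2 = DS ∧ PowerSeries.constantCoeff s = 1) ∧
    IsUnit (2 * (1 + PowerSeries.X) : PowerSeries ℚ) ∧
    ∀ s : PowerSeries (PowerSeries ℚ),
      s ^ 2 = DS → PowerSeries.constantCoeff s = 1 →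
        EqS (cS * (1 + tS * PowerSeries.X + s)) ∧
        EqS (cS * (1 + tS * PowerSeries.X - s)) ∧
        ∀ f : PowerSeries (PowerSeries ℚ), EqS f →
          f = cS * (1 + tS * PowerSeries.X + s) ∨
          f = cS * (1 + tS * PowerSeries.X - s) := by
  have hcc2 : PowerSeries.constantCoeff (R := ℚ) (2 * (1 + PowerSeries.X)) ≠ 0 := by
    simp [map_ofNat]
  have hui : (2 * (1 + PowerSeries.X) : PowerSeries ℚ) * (2 * (1 + PowerSeries.X))⁻¹ = 1 :=
    PowerSeries.mul_inv_cancel _ hcc2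
  have hUnit : IsUnit (2 * (1 + PowerSeries.X) : PowerSeries ℚ) :=
    IsUnit.of_mul_eq_one _ hui
  have hCform : (PowerSeries.C (R := PowerSeries ℚ)) (2 * (1 + PowerSeries.X) : PowerSeries ℚ)
      = 2 * (1 + tS) := by
    rw [map_mul, map_add, map_one, map_ofNat, tS]
  have hc : (2 * (1 + tS)) * cS = 1 := by
    have h := congrArg (PowerSeries.C (R := PowerSeries ℚ)) hui
    rw [map_mul, map_one, hCform] at h
    exact h
  refine ⟨⟨s0, ⟨s0_sq, s0_cc⟩, ?_⟩, hUnit, ?_⟩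
  · rintro y ⟨hy2, hycc⟩
    have hfac : (y - s0) * (y + s0) = 0 := by linear_combination hy2 - s0_sq
    rcases mul_eq_zero.mp hfac with h | h
    · exact sub_eq_zero.mp h
    · exfalso
      have h2 := congrArg (PowerSeries.constantCoeff (R := PowerSeries ℚ)) h
      rw [map_add, hycc, s0_cc, map_zero] at h2
      have h3 := congrArg (PowerSeries.constantCoeff (R := ℚ)) h2
      simp at h3
  · intro s hs hscc
    have hs' : s ^ 2 = 1 - 4 * PowerSeries.X - 2 * tS * PowerSeries.X
        + tS ^ 2 * PowerSeries.X ^ 2 := hs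
    refine ⟨?_, ?_, ?_⟩
    · show cS * (1 + tS * PowerSeries.X + s) = _
      linear_combination
        (-(cS * (1 - 2 * PowerSeries.X + tS ^ 2 * PowerSeries.X ^ 2
          + (1 + tS * PowerSeries.X) * s) - PowerSeries.X)) * hc
        + (-((1 + tS) * cS ^ 2)) * hs'
    · show cS * (1 + tS * PowerSeries.X - s) = _
      linear_combination
        (-(cS * (1 - 2 * PowerSeries.X + tS ^ 2 * PowerSeries.X ^ 2
          - (1 + tS * PowerSeries.X) * s) - PowerSeries.X)) * hc
        + (-((1 + tS) * cS ^ 2)) * hs'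
    · intro f hf
      have hf' : f = (1 + tS) * f ^ 2 - tS * PowerSeries.X * f + PowerSeries.X := hf
      have hsq : (2 * (1 + tS) * f - (1 + tS * PowerSeries.X)) ^ 2 = s ^ 2 := by
        linear_combination (-4 * (1 + tS)) * hf' - hs'
      have hfac : (2 * (1 + tS) * f - (1 + tS * PowerSeries.X) - s)
          * (2 * (1 + tS) * f - (1 + tS * PowerSeries.X) + s) = 0 := by
        linear_combination hsq
      rcases mul_eq_zero.mp hfac with h | h
      · left; linear_combination cS * h - f * hc
      · right; linear_combination cS * h - f * hc

end
end

section
/- Let D := 1 − 4x − 2tx + t²x² in (ℚ[[t]])[[x]], let s be the unique square root of D with constant coefficient 1, and set f± := (2(1+t))⁻¹·(1 + tx ± s). Then f₋ has constant coefficient 0 and its coefficient of x¹ equals 1, while f₊ has constant coefficient (1+t)⁻¹ and its coefficient of x¹ equals −(1+t)⁻¹; in particular, evaluating the x¹-coefficients at t = 0 gives 1 for f₋ and −1 for f₊. Consequently, f₋ is the unique solution of f = (1+t)·f² − t·x·f + x in (ℚ[[t]])[[x]] with constant coefficient 0. -/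
/-!
STATEMENT 2: In `(ℚ[[t]])[[x]]`, let `D := 1 − 4x − 2tx + t²x²`, let `s` be the unique
square root of `D` with constant coefficient `1`, and set `f± := (2(1+t))⁻¹·(1 + tx ± s)`.
Then `f₋` has constant coefficient `0` and `x¹`-coefficient `1`, while `f₊` has constant
coefficient `(1+t)⁻¹` and `x¹`-coefficient `−(1+t)⁻¹`; evaluating the `x¹`-coefficients at
`t = 0` gives `1` for `f₋` and `−1` for `f₊`.  Consequently `f₋` is the unique solution of
`f = (1+t)·f² − t·x·f + x` with constant coefficient `0`.
-/

noncomputable section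

theorem stmt_2 :
    ∀ s : PowerSeries (PowerSeries ℚ),
      s ^ 2 = DS → PowerSeries.constantCoeff s = 1 →
      (∀ s' : PowerSeries (PowerSeries ℚ),
          s' ^ 2 = DS → PowerSeries.constantCoeff s' = 1 → s' = s) →
      PowerSeries.constantCoeff
          (cS * (1 + tS * PowerSeries.X - s)) = 0 ∧
      PowerSeries.coeff 1 (cS * (1 + tS * PowerSeries.X - s)) = 1 ∧
      PowerSeries.constantCoeff (cS * (1 + tS * PowerSeries.X + s)) =
        ((1 + PowerSeries.X : PowerSeries ℚ))⁻¹ ∧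
      PowerSeries.coeff 1 (cS * (1 + tS * PowerSeries.X + s)) =
        -((1 + PowerSeries.X : PowerSeries ℚ))⁻¹ ∧
      PowerSeries.constantCoeff
          (PowerSeries.coeff 1 (cS * (1 + tS * PowerSeries.X - s))) = 1 ∧
      PowerSeries.constantCoeff
          (PowerSeries.coeff 1 (cS * (1 + tS * PowerSeries.X + s))) = -1 ∧
      EqS (cS * (1 + tS * PowerSeries.X - s)) ∧
      ∀ f : PowerSeries (PowerSeries ℚ),
        EqS f → PowerSeries.constantCoeff f = 0 →
          f = cS * (1 + tS * PowerSeries.X - s) := by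
  intro s hs2 hs0 _
  have hinv : ((2 * (1 + PowerSeries.X) : PowerSeries ℚ))⁻¹ * (2 * (1 + PowerSeries.X)) = 1 :=
    PowerSeries.inv_mul_cancel _ (by simp [map_ofNat])
  have hcu : cS * (2 * (1 + tS)) = 1 := by
    rw [cS, tS, show (2 * (1 + PowerSeries.C PowerSeries.X) : PowerSeries (PowerSeries ℚ)) =
      PowerSeries.C (2 * (1 + PowerSeries.X) : PowerSeries ℚ) by simp [map_ofNat], ← map_mul,
      hinv, map_one]
  have hi2 : ((2 : PowerSeries ℚ))⁻¹ * 2 = 1 :=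
    PowerSeries.inv_mul_cancel _ (by simp [map_ofNat])
  have hix : ((1 + PowerSeries.X : PowerSeries ℚ))⁻¹ * (1 + PowerSeries.X) = 1 :=
    PowerSeries.inv_mul_cancel _ (by simp)
  -- the x¹-coefficient of s
  have hs1 : PowerSeries.coeff 1 s = -2 - PowerSeries.X := by
    have h := congrArg (PowerSeries.coeff 1) hs2
    rw [DS] at h
    simp [pow_two, PowerSeries.coeff_mul, Finset.Nat.sum_antidiagonal_succ, map_ofNat,
      PowerSeries.coeff_zero_eq_constantCoeff, hs0, tS] at h
    have h2 : (2 : PowerSeries ℚ) * PowerSeries.coeff 1 s =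
        2 * (-2 - PowerSeries.X) := by linear_combination h
    have htwo : (2 : PowerSeries ℚ) ≠ 0 := by
      intro hx
      have := congrArg (PowerSeries.constantCoeff) hx
      simp [map_ofNat] at this
    exact mul_left_cancel₀ htwo h2
  -- constant coefficients
  have hm0 : PowerSeries.constantCoeff (cS * (1 + tS * PowerSeries.X - s)) = 0 := by
    simp [cS, tS, hs0]
  have hp0 : PowerSeries.constantCoeff (cS * (1 + tS * PowerSeries.X + s)) =
      ((1 + PowerSeries.X : PowerSeries ℚ))⁻¹ := by
    simp [cS, tS, hs0]
    linear_combination ((1 + PowerSeries.X : PowerSeries ℚ))⁻¹ * hi2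
  -- x¹-coefficients
  have hm1 : PowerSeries.coeff 1 (cS * (1 + tS * PowerSeries.X - s)) = 1 := by
    rw [cS, PowerSeries.coeff_C_mul]
    simp [tS, hs1, PowerSeries.coeff_C_mul]
    linear_combination (((1 + PowerSeries.X : PowerSeries ℚ))⁻¹ * (1 + PowerSeries.X)) * hi2 + hix
  have hp1 : PowerSeries.coeff 1 (cS * (1 + tS * PowerSeries.X + s)) =
      -((1 + PowerSeries.X : PowerSeries ℚ))⁻¹ := by
    rw [cS, PowerSeries.coeff_C_mul]
    simp [tS, hs1, PowerSeries.coeff_C_mul]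
    linear_combination ((1 + PowerSeries.X : PowerSeries ℚ))⁻¹ * hi2
  -- EqS for f₋
  have hDS : s ^ 2 = 1 - 4 * PowerSeries.X - 2 * tS * PowerSeries.X
      + tS ^ 2 * PowerSeries.X ^ 2 := by rw [hs2, DS]
  have hEq : EqS (cS * (1 + tS * PowerSeries.X - s)) := by
    rw [EqS]
    linear_combination (-(cS ^ 2 * (1 + tS))) * hDS +
      (PowerSeries.X * (1 + cS * (2 * (1 + tS))) -
        cS * (1 + tS * PowerSeries.X - s) * (1 + tS * PowerSeries.X)) * hcu
  refine ⟨hm0, hm1, hp0, hp1, by rw [hm1]; simp, by rw [hp1]; simp [PowerSeries.constantCoeff_inv],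
    hEq, ?_⟩
  -- uniqueness
  intro f hf hf0
  have h1 := hf; rw [EqS] at h1
  have h2 := hEq; rw [EqS] at h2
  set F := cS * (1 + tS * PowerSeries.X - s) with hF
  have key : (f - F) * (1 + tS * PowerSeries.X - (1 + tS) * (f + F)) = 0 := by
    linear_combination h1 - h2
  rcases mul_eq_zero.mp key with h | h
  · exact sub_eq_zero.mp h
  · exfalso
    have hc := congrArg (PowerSeries.constantCoeff) h
    simp [tS, hf0, hm0] at hc

end
end

section
/- Fix r ≥ 1, k ≥ 2, a partition of {1,…,r} into nonempty pairwise disjoint sets S₁,…,S_k, and nonnegative integers p₁,…,p_k; set p := p₁ + ⋯ + p_k + k − 2. In the multivariate power series ring ℚ[[x₁,…,x_r]], set u_i := ∏_{j∈S_i}(1−x_j) and u := ∏_{j=1}^r (1−x_j) (which are units), and define G_i := (−1)^{p_i}·(u_i⁻¹ − 1) for 1 ≤ i ≤ k and G := (−1)^p·(u⁻¹ − 1). Then (−1)^p + G and each (−1)^{p_i} + G_i are units, and G = G²·((−1)^p + G)⁻¹ + (−1)^{p−1}·( ∏_{i=1}^k (−1)^{p_i}·((−1)^{p_i} + G_i)⁻¹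 − 1 ). -/
/-!
STATEMENT 4: Fix `r ≥ 1`, `k ≥ 2`, a partition of `{1,…,r}` into nonempty pairwise
disjoint sets `S₁,…,S_k`, and nonnegative integers `p₁,…,p_k`; set
`p := p₁ + ⋯ + p_k + k − 2`.  In `ℚ[[x₁,…,x_r]]` set `u_i := ∏_{j ∈ S_i}(1−x_j)` and
`u := ∏_{j=1}^r (1−x_j)` (units), and define `G_i := (−1)^{p_i}·(u_i⁻¹ − 1)` and
`G := (−1)^p·(u⁻¹ − 1)`.  Then `(−1)^p + G` and each `(−1)^{p_i} + G_i` are units, and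
`G = G²·((−1)^p + G)⁻¹ + (−1)^{p−1}·(∏_i (−1)^{p_i}·((−1)^{p_i} + G_i)⁻¹ − 1)`.
-/

noncomputable section

/-- `∏_{j ∈ s} (1 - x_j)` in `ℚ[[x₁,…,x_r]]`. -/
def uu (r : ℕ) (s : Finset (Fin r)) : MvPowerSeries (Fin r) ℚ :=
  ∏ j ∈ s, (1 - MvPowerSeries.X j)

/-- `(−1)^q · ((∏_{j ∈ s} (1 - x_j))⁻¹ − 1)` in `ℚ[[x₁,…,x_r]]`. -/
def GG (r : ℕ) (q : ℕ) (s : Finset (Fin r)) : MvPowerSeries (Fin r) ℚ :=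
  (-1) ^ q * ((uu r s)⁻¹ - 1)

lemma constantCoeff_uu (r : ℕ) (s : Finset (Fin r)) :
    MvPowerSeries.constantCoeff (uu r s) = 1 := by
  simp [uu, map_prod]

lemma isUnit_uu (r : ℕ) (s : Finset (Fin r)) : IsUnit (uu r s) := by
  rw [MvPowerSeries.isUnit_iff_constantCoeff, constantCoeff_uu]
  exact isUnit_one

lemma uu_mul_inv (r : ℕ) (s : Finset (Fin r)) : uu r s * (uu r s)⁻¹ = 1 :=
  MvPowerSeries.mul_inv_cancel _ (by rw [constantCoeff_uu]; norm_num)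

lemma key_inv (r q : ℕ) (s : Finset (Fin r)) :
    ((-1) ^ q + GG r q s)⁻¹ = (-1) ^ q * uu r s := by
  rw [MvPowerSeries.inv_eq_iff_mul_eq_one]
  · have hu := uu_mul_inv r s
    have he : ((-1 : MvPowerSeries (Fin r) ℚ)) ^ q * (-1) ^ q = 1 := by
      rw [← pow_add]; exact (Even.add_self q).neg_one_pow
    unfold GG
    generalize ((-1 : MvPowerSeries (Fin r) ℚ)) ^ q = e at he ⊢
    generalize (uu r s)⁻¹ = v at hu ⊢
    generalize uu r s = u at hu ⊢
    linear_combination (u * v) * he + hu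
  · have h1 : MvPowerSeries.constantCoeff ((uu r s)⁻¹) = 1 := by
      rw [MvPowerSeries.constantCoeff_inv, constantCoeff_uu]; norm_num
    simp [GG, h1, constantCoeff_uu]

lemma isUnit_key (r q : ℕ) (s : Finset (Fin r)) : IsUnit ((-1) ^ q + GG r q s) := by
  rw [MvPowerSeries.isUnit_iff_constantCoeff]
  have h1 : MvPowerSeries.constantCoeff ((uu r s)⁻¹) = 1 := by
    rw [MvPowerSeries.constantCoeff_inv, constantCoeff_uu]; norm_num
  simp [GG, h1]

theorem stmt_4 (r k : ℕ) (hr : 1 ≤ r) (hk : 2 ≤ k)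
    (S : Fin k → Finset (Fin r))
    (hne : ∀ i, (S i).Nonempty)
    (hdisj : ∀ i j, i ≠ j → Disjoint (S i) (S j))
    (hcover : ∀ x : Fin r, ∃ i, x ∈ S i)
    (p : Fin k → ℕ) :
    IsUnit (uu r Finset.univ) ∧ (∀ i, IsUnit (uu r (S i))) ∧
    IsUnit ((-1) ^ ((∑ i, p i) + k - 2) + GG r ((∑ i, p i) + k - 2) Finset.univ) ∧
    (∀ i, IsUnit ((-1) ^ (p i) + GG r (p i) (S i))) ∧
    GG r ((∑ i, p i) + k - 2) Finset.univ =
      (GG r ((∑ i, p i) + k - 2) Finset.univ) ^ 2 *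
        ((-1) ^ ((∑ i, p i) + k - 2) + GG r ((∑ i, p i) + k - 2) Finset.univ)⁻¹
      + (-1) ^ ((∑ i, p i) + k - 2 + 1) *
          ((∏ i, (-1) ^ (p i) * ((-1) ^ (p i) + GG r (p i) (S i))⁻¹) - 1) := by
  refine ⟨isUnit_uu r _, fun i => isUnit_uu r _, isUnit_key r _ _,
    fun i => isUnit_key r _ _, ?_⟩
  set q := (∑ i, p i) + k - 2 with hq
  -- the product over the partition
  have hprod : (∏ i, (-1 : MvPowerSeries (Fin r) ℚ) ^ (p i) *
      ((-1) ^ (p i) + GG r (p i) (S i))⁻¹) = uu r Finset.univ := by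
    have h1 : ∀ i : Fin k, ((-1 : MvPowerSeries (Fin r) ℚ)) ^ (p i) *
        ((-1) ^ (p i) + GG r (p i) (S i))⁻¹ = uu r (S i) := by
      intro i
      rw [key_inv]
      rw [← mul_assoc, ← pow_add, (Even.add_self (p i)).neg_one_pow, one_mul]
    rw [Finset.prod_congr rfl fun i _ => h1 i]
    have hU : (Finset.univ : Finset (Fin r)) = Finset.univ.biUnion S := by
      ext x
      simp [hcover x]
    rw [hU, uu]
    rw [Finset.prod_biUnion (fun i _ j _ hij => hdisj i j hij)]
    rfl
  rw [hprod, key_inv]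
  have he : ((-1 : MvPowerSeries (Fin r) ℚ)) ^ q * (-1) ^ q = 1 := by
    rw [← pow_add]; exact (Even.add_self q).neg_one_pow
  have hu := uu_mul_inv r (Finset.univ : Finset (Fin r))
  unfold GG
  rw [show ((-1 : MvPowerSeries (Fin r) ℚ)) ^ (q + 1) = (-1) * (-1) ^ q from by
    rw [pow_succ]; ring]
  generalize ((-1 : MvPowerSeries (Fin r) ℚ)) ^ q = e at he ⊢
  generalize (uu r Finset.univ)⁻¹ = v at hu ⊢
  generalize uu r Finset.univ = u at hu ⊢
  linear_combination (-(e * (v - 1) ^ 2 * u)) * he + (-(e * (v - 2))) * hu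

end
end

section
/- Let k ≥ 1 and let P₁,…,P_k be finite types, each with a distinguished element ⊥_i ∈ P_i and a rank function d_i : P_i → ℤ, and suppose each P_i is balanced, i.e. ∑_{p ∈ P_i} (−1)^{d_i(p)} = 0. Define the k-fold reduced product to be the disjoint union ( ∏_{i=1}^k (P_i∖{⊥_i}) ) ⊔ {⋆}, with rank d(p₁,…,p_k) := ∑_{i=1}^k d_i(p_i) on the product part and d(⋆) := ∑_{i=1}^k d_i(⊥_i) + k − 1. Then the k-fold reduced product is balanced: ∑ over all its elements of (−1)^d equals 0. -/
lemma zpow_sum'' {ι : Type*} (a : ℚ) (ha : a ≠ 0) (s : Finset ι) (f : ι → ℤ) :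
    a ^ (∑ i ∈ s, f i) = ∏ i ∈ s, a ^ f i := by
  classical
  induction s using Finset.induction with
  | empty => simp
  | insert _ _ h ih => simp [Finset.sum_insert h, Finset.prod_insert h, zpow_add₀ ha, ih]

theorem stmt_6 (k : ℕ) (hk : 1 ≤ k) (P : Fin k → Type)
    [∀ i, Fintype (P i)] [∀ i, DecidableEq (P i)]
    (bot : ∀ i, P i) (d : ∀ i, P i → ℤ)
    (hbal : ∀ i, ∑ p : P i, (-1 : ℚ) ^ (d i p) = 0) :
    ∑ z : ((i : Fin k) → {p : P i // p ≠ bot i}) ⊕ Unit,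
      (-1 : ℚ) ^ (Sum.elim (fun f => ∑ i, d i (f i).1)
        (fun _ => (∑ i, d i (bot i)) + (k : ℤ) - 1) z) = 0 := by
  have hne : (-1 : ℚ) ≠ 0 := by norm_num
  have hsub : ∀ i, ∑ p : {p : P i // p ≠ bot i}, (-1 : ℚ) ^ (d i p.1)
      = -(-1 : ℚ) ^ (d i (bot i)) := by
    intro i
    have h := hbal i
    have key := Fintype.sum_subtype_add_sum_subtype (fun p => p ≠ bot i)
      (fun p => (-1 : ℚ) ^ (d i p))
    haveI : Unique {x : P i // ¬ x ≠ bot i} :=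
      ⟨⟨⟨bot i, by simp⟩⟩, fun x => Subtype.ext (by simpa using x.2)⟩
    have h2 : ∑ p : {x : P i // ¬ x ≠ bot i}, (-1 : ℚ) ^ (d i p.1)
        = (-1 : ℚ) ^ (d i (bot i)) := by
      rw [Fintype.sum_unique]
      have hd := (default : {x : P i // ¬ x ≠ bot i}).2
      simp only [not_not] at hd
      rw [hd]
    rw [h2, h] at key
    linarith [key]
  calc ∑ z : ((i : Fin k) → {p : P i // p ≠ bot i}) ⊕ Unit,
      (-1 : ℚ) ^ (Sum.elim (fun f => ∑ i, d i (f i).1)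
        (fun _ => (∑ i, d i (bot i)) + (k : ℤ) - 1) z)
      = (∑ f : (i : Fin k) → {p : P i // p ≠ bot i}, (-1 : ℚ) ^ (∑ i, d i (f i).1))
        + (-1 : ℚ) ^ ((∑ i, d i (bot i)) + (k : ℤ) - 1) := by
        rw [Fintype.sum_sum_type]; simp
    _ = (∏ i, ∑ p : {p : P i // p ≠ bot i}, (-1 : ℚ) ^ (d i p.1))
        + (-1 : ℚ) ^ ((∑ i, d i (bot i)) + (k : ℤ) - 1) := by
        rw [Fintype.prod_sum]
        congr 1
        apply Finset.sum_congr rfl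
        intro f _
        exact zpow_sum'' (-1) hne _ _
    _ = 0 := by
        have e1 : ∀ i : Fin k, -(-1:ℚ)^(d i (bot i)) = (-1:ℚ)^(1 + d i (bot i)) := by
          intro i; rw [zpow_add₀ hne]; simp
        simp only [hsub, e1, ← zpow_sum'' (-1) hne]
        rw [Finset.sum_add_distrib, Finset.sum_const, Finset.card_univ, Fintype.card_fin,
          nsmul_eq_mul, mul_one]
        rw [sub_eq_add_neg, zpow_add₀ hne, zpow_add₀ hne, zpow_add₀ hne]
        norm_num
        ring
end
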